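/- Let X be the ordinal ω₁ + 1 equipped with the order topology and let f : X → ℝ be the characteristic function of {ω₁} (f(α) = 0 for α < ω₁ and f(ω₁) = 1). Then f is discontinuous, but for every countable subset S of X there exists a continuous function h : X → ℝ such that h restricted to S equals f restricted to S. -/

import Mathlib

open Filter Topology Set

universe u v

/-- The ordinal ω₁ + 1, realized as the set of ordinals ≤ ω₁, equipped with
the order topology. -/
def Omega1Succ : Type 1 := {o : Ordinal.{0} // o ≤ (Cardinal.aleph 1).ord}

noncomputable instance : LinearOrder Omega1Succ :=
  inferInstanceAs (LinearOrder {o : Ordinal.{0} // o ≤ (Cardinal.aleph 1).ord})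

noncomputable instance : TopologicalSpace Omega1Succ := Preorder.topology Omega1Succ

noncomputable instance : DecidableEq Omega1Succ := fun a b => LinearOrder.toDecidableEq a b

instance : OrderTopology Omega1Succ := ⟨rfl⟩

namespace Omega1SuccAux

noncomputable def mk (o : Ordinal.{0}) (h : o ≤ (Cardinal.aleph 1).ord) : Omega1Succ := ⟨o, h⟩

lemma le_iff (a b : Omega1Succ) : a ≤ b ↔ a.1 ≤ b.1 := Iff.rfl
lemma lt_iff (a b : Omega1Succ) : a < b ↔ a.1 < b.1 := Iff.rfl

lemma ord_limit : Order.IsSuccLimit ((Cardinal.aleph 1).ord) :=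
  Cardinal.isSuccLimit_ord (Cardinal.aleph0_le_aleph 1)

end Omega1SuccAux

open Omega1SuccAux in
/-- The characteristic function of {ω₁} on ω₁ + 1 is discontinuous but agrees with a
continuous function on every countable subset. -/
theorem charFun_omega1_discontinuous_but_countably_continuous :
    ¬ Continuous (fun a : Omega1Succ =>
        @ite ℝ (a = ⟨(Cardinal.aleph 1).ord, le_rfl⟩) (LinearOrder.toDecidableEq _ _) (1 : ℝ) 0) ∧
    ∀ S : Set Omega1Succ, S.Countable →
      ∃ h : Omega1Succ → ℝ, Continuous h ∧ ∀ x ∈ S,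
        h x = (@ite ℝ (x = ⟨(Cardinal.aleph 1).ord, le_rfl⟩) (LinearOrder.toDecidableEq _ _) (1 : ℝ) 0) := by
  set ω₁ : Ordinal.{0} := (Cardinal.aleph 1).ord with hω₁
  set T : Omega1Succ := ⟨ω₁, le_rfl⟩ with hT
  constructor
  · intro hc
    have hUopen : IsOpen ((fun a : Omega1Succ =>
        if a = T then (1 : ℝ) else 0) ⁻¹' (Set.Ioi (1/2 : ℝ))) :=
      (isOpen_Ioi).preimage hc
    have hTU : T ∈ (fun a : Omega1Succ =>
        if a = T then (1 : ℝ) else 0) ⁻¹' (Set.Ioi (1/2 : ℝ)) := by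
      simp [Set.mem_preimage]; norm_num
    have hnhds : (fun a : Omega1Succ =>
        if a = T then (1 : ℝ) else 0) ⁻¹' (Set.Ioi (1/2 : ℝ)) ∈ 𝓝 T :=
      hUopen.mem_nhds hTU
    have hbot : ∃ l : Omega1Succ, l < T := by
      refine ⟨⟨0, ord_limit.pos.le⟩, ?_⟩
      exact (lt_iff _ _).mpr ord_limit.pos
    obtain ⟨l, hlT, hIoc⟩ := exists_Ioc_subset_of_mem_nhds hnhds hbot
    have hl1 : l.1 < ω₁ := (lt_iff _ _).mp hlT
    have hsucc : Order.succ l.1 < ω₁ := ord_limit.succ_lt hl1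
    set x : Omega1Succ := ⟨Order.succ l.1, hsucc.le⟩ with hx
    have hxmem : x ∈ Set.Ioc l T := by
      constructor
      · exact (lt_iff _ _).mpr (Order.lt_succ l.1)
      · exact (le_iff _ _).mpr hsucc.le
    have hxne : x ≠ T := by
      intro hEq
      exact absurd (congrArg Subtype.val hEq) hsucc.ne
    have := hIoc hxmem
    simp only [Set.mem_preimage, if_neg hxne, Set.mem_Ioi] at this
    norm_num at this
  · intro S hS
    -- the ordinals below ω₁ appearing in S
    set A : Set Ordinal.{0} := (Subtype.val '' S) ∩ Set.Iio ω₁ with hA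
    have hAcount : A.Countable := (hS.image _).mono Set.inter_subset_left
    obtain ⟨β, hβlt, hmemle⟩ : ∃ β : Ordinal.{0}, β < ω₁ ∧ ∀ o ∈ A, o ≤ β := by
      rcases A.eq_empty_or_nonempty with hAe | hAne
      · exact ⟨0, ord_limit.pos, by simp [hAe]⟩
      · obtain ⟨g, hg⟩ := hAcount.exists_eq_range hAne
        refine ⟨⨆ n, g n, ?_, ?_⟩
        · apply Ordinal.iSup_lt_ord
          · rw [Cardinal.isRegular_aleph_one.cof_eq, Cardinal.mk_nat]
            exact Cardinal.aleph0_lt_aleph_one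
          · intro n
            have : g n ∈ A := hg ▸ Set.mem_range_self n
            exact this.2
        · intro o ho
          rw [hg] at ho
          obtain ⟨n, rfl⟩ := ho
          exact Ordinal.le_iSup g n
    set b : Omega1Succ := ⟨β, hβlt.le⟩ with hb
    have hsucc : Order.succ β ≤ ω₁ := (ord_limit.succ_lt hβlt).le
    set b' : Omega1Succ := ⟨Order.succ β, hsucc⟩ with hb'
    have hIic : Set.Iic b = Set.Iio b' := by
      ext y
      simp only [Set.mem_Iic, Set.mem_Iio, le_iff, lt_iff]
      exact (Order.lt_succ_iff).symm
    have hclopen : IsClopen (Set.Iic b) := ⟨isClosed_Iic, hIic ▸ isOpen_Iio⟩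
    classical
    refine ⟨fun x => if x ≤ b then (0 : ℝ) else 1, ?_, ?_⟩
    · apply Continuous.if
      · intro a ha
        have : frontier {x : Omega1Succ | x ≤ b} = ∅ := by
          have : {x : Omega1Succ | x ≤ b} = Set.Iic b := rfl
          rw [this, hclopen.frontier_eq]
        simp [this] at ha
      · exact continuous_const
      · exact continuous_const
    · intro x hx
      by_cases hxT : x = T
      · subst hxT
        have hnle : ¬ (T ≤ b) := by
          simp only [le_iff]
          exact not_le.mpr hβlt
        simp [hnle]
      · have hxlt : x.1 < ω₁ := lt_of_le_of_ne x.2 (fun h => hxT (Subtype.ext h))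
        have hxA : x.1 ∈ A := ⟨⟨x, hx, rfl⟩, hxlt⟩
        have hxb : x ≤ b := (le_iff _ _).mpr (hmemle _ hxA)
        simp [hxb, hxT]
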